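/- Suppose (X,d) is a separable, complete, pair-propinquitous, approximately ultrahomogeneous metric space. Then for every x ∈ X and every r > 0, the set V_{{x},r} = {f ∈ Iso(X) : d(x, f(x)) < r} is a Roelcke precompact subset of Iso(X); in particular, Iso(X) is locally Roelcke precompact. -/

import Mathlib

open scoped Pointwise

/-- A subset `A` of a topological group `G` is *Roelcke precompact* if for every
neighborhood `V` of the identity there is a finite set `F ⊆ G` with `A ⊆ V * F * V`,
where `V * F * V = {v * f * w : v, w ∈ V, f ∈ F}`. -/
def RoelckePrecompact {G : Type*} [Group G] [TopologicalSpace G] (A : Set G) : Prop :=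
  ∀ V ∈ nhds (1 : G), ∃ F : Finset G, A ⊆ V * (F : Set G) * V

/-- A topological group is *locally Roelcke precompact* if some open neighborhood
of the identity is Roelcke precompact. -/
def LocallyRoelckePrecompact (G : Type*) [Group G] [TopologicalSpace G] : Prop :=
  ∃ U : Set G, IsOpen U ∧ (1 : G) ∈ U ∧ RoelckePrecompact U

/-- The topology of pointwise convergence on the isometry group of a metric space. -/
noncomputable def isoGroupTopology (X : Type*) [MetricSpace X] :
    TopologicalSpace (X ≃ᵢ X) :=
  TopologicalSpace.induced (fun f : X ≃ᵢ X => (f : X → X)) Pi.topologicalSpace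

/-- A metric space `X` is *pair-propinquitous* if for every finite metric space `A` and
every `ε > 0` there is `δ > 0` such that whenever `i₁, i₂, j₁, j₂ : A → X` are isometric
embeddings with `|d(i₁ a, i₂ b) − d(j₁ a, j₂ b)| < δ` for all `a, b ∈ A`, there are
isometric embeddings `j₁', j₂' : A → X` with `d(j₁ a, j₂ b) = d(j₁' a, j₂' b)`,
`d(i₁ a, j₁' a) < ε` and `d(i₂ a, j₂' a) < ε` for all `a, b ∈ A`. -/
def PairPropinquitous (X : Type*) [MetricSpace X] : Prop :=
  ∀ (A : Type) [MetricSpace A] [Finite A], ∀ ε : ℝ, 0 < ε → ∃ δ : ℝ, 0 < δ ∧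
    ∀ i₁ i₂ j₁ j₂ : A → X, Isometry i₁ → Isometry i₂ → Isometry j₁ → Isometry j₂ →
      (∀ a b : A, |dist (i₁ a) (i₂ b) - dist (j₁ a) (j₂ b)| < δ) →
      ∃ j₁' j₂' : A → X, Isometry j₁' ∧ Isometry j₂' ∧
        (∀ a b : A, dist (j₁ a) (j₂ b) = dist (j₁' a) (j₂' b)) ∧
        (∀ a : A, dist (i₁ a) (j₁' a) < ε) ∧ (∀ a : A, dist (i₂ a) (j₂' a) < ε)

/-- A metric space `X` is *approximately ultrahomogeneous* if for every `ε > 0` and every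
isometry `f` defined on a finite subset of `X` there is a surjective self-isometry of `X`
agreeing with `f` up to `ε` at every point of the domain of `f`. -/
def ApproximatelyUltrahomogeneous (X : Type*) [MetricSpace X] : Prop :=
  ∀ (A : Finset X) (f : A → X), Isometry f → ∀ ε : ℝ, 0 < ε →
    ∃ g : X ≃ᵢ X, ∀ a : A, dist (f a) (g (a : X)) < ε

lemma iso_nhds_basic {X : Type*} [MetricSpace X] {V : Set (X ≃ᵢ X)}
    (hV : V ∈ @nhds _ (isoGroupTopology X) 1) (x : X) :
    ∃ (A : Finset X) (ε : ℝ), 0 < ε ∧ x ∈ A ∧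
      {f : X ≃ᵢ X | ∀ a ∈ A, dist a (f a) < ε} ⊆ V := by
  classical
  have hnhds : @nhds (X ≃ᵢ X) (isoGroupTopology X) 1 =
      Filter.comap (fun f : X ≃ᵢ X => (f : X → X)) (nhds ((1 : X ≃ᵢ X) : X → X)) :=
    nhds_induced (fun f : X ≃ᵢ X => (f : X → X)) 1
  rw [hnhds, Filter.mem_comap] at hV
  obtain ⟨U, hU, hUV⟩ := hV
  rw [nhds_pi, Filter.mem_pi] at hU
  obtain ⟨I, hIfin, tt, htt, httU⟩ := hU
  have htt' : ∀ a : X, tt a ∈ nhds a := htt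
  have hball : ∀ a : X, ∃ ε : ℝ, 0 < ε ∧ Metric.ball a ε ⊆ tt a :=
    fun a => Metric.mem_nhds_iff.mp (htt' a)
  choose ε' hε' hball' using hball
  refine ⟨insert x hIfin.toFinset,
    (insert x hIfin.toFinset).inf' (Finset.insert_nonempty _ _) ε',
    ?_, Finset.mem_insert_self _ _, ?_⟩
  · rw [Finset.lt_inf'_iff]
    exact fun i _ => hε' i
  · intro f hf
    apply hUV
    refine httU ?_
    intro a ha
    apply hball' a
    rw [Metric.mem_ball, dist_comm]
    exact lt_of_lt_of_le (hf a (Finset.mem_insert_of_mem (hIfin.mem_toFinset.mpr ha)))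
      (Finset.inf'_le _ (Finset.mem_insert_of_mem (hIfin.mem_toFinset.mpr ha)))

lemma roelcke_key {X : Type*} [MetricSpace X]
    (hpp : PairPropinquitous X) (hau : ApproximatelyUltrahomogeneous X)
    (x : X) (s : ℝ) (hs : 0 < s) :
    @RoelckePrecompact (X ≃ᵢ X) _ (isoGroupTopology X) {f : X ≃ᵢ X | dist x (f x) < s} := by
  classical
  intro V hV
  obtain ⟨A, ε, hε, hxA, hWV⟩ := iso_nhds_basic hV x
  set e : {a // a ∈ A} ≃ Fin A.card := A.equivFin with he
  set ι : Fin A.card → X := fun i => ((e.symm i : {a // a ∈ A}) : X) with hιdef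
  have hinj : Function.Injective ι := fun i j hij => e.symm.injective (Subtype.coe_injective hij)
  letI : MetricSpace (Fin A.card) := MetricSpace.induced ι hinj inferInstance
  have hdistFin : ∀ u v : Fin A.card, dist u v = dist (ι u) (ι v) := fun _ _ => rfl
  have hι : Isometry ι := Isometry.of_dist_eq fun _ _ => rfl
  have hιmem : ∀ i, ι i ∈ A := fun i => (e.symm i).2
  have hιe : ∀ (a : X) (ha : a ∈ A), ι (e ⟨a, ha⟩) = a :=
    fun a ha => congrArg Subtype.val (e.symm_apply_apply ⟨a, ha⟩)
  obtain ⟨δ, hδ, hδprop⟩ := hpp (Fin A.card) (ε/3) (by positivity)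
  set Φ : (X ≃ᵢ X) → (Fin A.card × Fin A.card → ℝ) :=
    fun g p => dist (ι p.1) (g (ι p.2)) with hΦ
  set C : ℝ := A.sup' ⟨x, hxA⟩ (fun a => dist a x) with hCdef
  have hC : ∀ a ∈ A, dist a x ≤ C := fun a ha => by rw [hCdef]; exact Finset.le_sup' (fun a => dist a x) ha
  have hC0 : 0 ≤ C := le_trans dist_nonneg (hC x hxA)
  have hsub : Φ '' {f : X ≃ᵢ X | dist x (f x) < s} ⊆ Metric.closedBall 0 (C + (s + C)) := by
    rintro _ ⟨g, hg, rfl⟩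
    rw [Metric.mem_closedBall, dist_pi_le_iff (by positivity)]
    intro p
    have h1 : dist (ι p.1) x ≤ C := hC _ (hιmem p.1)
    have h2 : dist (g x) (g (ι p.2)) ≤ C := by
      rw [g.dist_eq, dist_comm]; exact hC _ (hιmem p.2)
    have h3 : dist (ι p.1) (g (ι p.2)) ≤ C + (s + C) := by
      calc dist (ι p.1) (g (ι p.2)) ≤ dist (ι p.1) x + dist x (g (ι p.2)) := dist_triangle _ _ _
        _ ≤ dist (ι p.1) x + (dist x (g x) + dist (g x) (g (ι p.2))) :=
            add_le_add (le_refl _) (dist_triangle _ _ _)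
        _ ≤ C + (s + C) := add_le_add h1 (add_le_add (le_of_lt hg) h2)
    simpa [hΦ, Real.dist_eq, abs_of_nonneg dist_nonneg] using h3
  have hTB : TotallyBounded (Φ '' {f : X ≃ᵢ X | dist x (f x) < s}) :=
    TotallyBounded.subset hsub
      (isCompact_closedBall (0 : Fin A.card × Fin A.card → ℝ) (C + (s + C))).totallyBounded
  obtain ⟨t, hts, htfin, hcov⟩ :=
    totallyBounded_iff_subset.mp hTB _ (Metric.dist_mem_uniformity hδ)
  haveI := htfin.to_subtype
  choose gOf hgS hgΦ using fun y : t => hts y.2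
  refine ⟨(Set.finite_range gOf).toFinset, ?_⟩
  intro g hg
  obtain ⟨y, hy, hyd⟩ := Set.mem_iUnion₂.mp (hcov ⟨g, hg, rfl⟩)
  set g₀ : X ≃ᵢ X := gOf ⟨y, hy⟩ with hg₀def
  have hg₀F : g₀ ∈ (((Set.finite_range gOf).toFinset : Finset (X ≃ᵢ X)) : Set (X ≃ᵢ X)) := by
    rw [Finset.mem_coe, Set.Finite.mem_toFinset]
    exact ⟨⟨y, hy⟩, rfl⟩
  have hnear : ∀ a b : Fin A.card, |dist (ι a) (g (ι b)) - dist (ι a) (g₀ (ι b))| < δ := by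
    have h1 : dist (Φ g) (Φ g₀) < δ := by rw [hg₀def, hgΦ ⟨y, hy⟩]; exact hyd
    intro a b
    have h2 := (dist_pi_lt_iff hδ).mp h1 (a, b)
    simpa [hΦ, Real.dist_eq] using h2
  obtain ⟨j₁', j₂', hj₁', hj₂', heq0, hc₁0, hc₂0⟩ :=
    hδprop ι (fun i => g (ι i)) ι (fun i => g₀ (ι i)) hι (g.isometry.comp hι) hι
      (g₀.isometry.comp hι) hnear
  have heq : ∀ a b, dist (ι a) (g₀ (ι b)) = dist (j₁' a) (j₂' b) := heq0
  have hc₁ : ∀ a, dist (ι a) (j₁' a) < ε/3 := hc₁0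
  have hc₂ : ∀ a, dist (g (ι a)) (j₂' a) < ε/3 := hc₂0
  set S' : Finset X := A ∪ A.image (fun a => g₀ a) with hS'
  have hmemS' : ∀ b ∈ A, g₀ b ∈ S' := fun b hb =>
    Finset.mem_union_right _ (Finset.mem_image_of_mem _ hb)
  have hAS' : ∀ a ∈ A, a ∈ S' := fun a ha => Finset.mem_union_left _ ha
  have hsymmA : ∀ (z : X), z ∈ S' → z ∉ A → g₀.symm z ∈ A := by
    intro z hz hzA
    rcases Finset.mem_union.mp hz with h | h
    · exact absurd h hzA
    · obtain ⟨b, hb, hbz⟩ := Finset.mem_image.mp h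
      rw [← hbz, g₀.symm_apply_apply]; exact hb
  set p : {z // z ∈ S'} → X := fun z =>
    if h : (z : X) ∈ A then j₁' (e ⟨z, h⟩) else j₂' (e ⟨g₀.symm z, hsymmA z z.2 h⟩) with hp
  have hpA : ∀ (z : {z // z ∈ S'}) (h : (z : X) ∈ A), p z = j₁' (e ⟨z, h⟩) := by
    intro z h; simp only [hp]; exact dif_pos h
  have hpB : ∀ (z : {z // z ∈ S'}) (h : (z : X) ∉ A),
      p z = j₂' (e ⟨g₀.symm z, hsymmA z z.2 h⟩) := by
    intro z h; simp only [hp]; exact dif_neg h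
  have hpg₀ : ∀ (b : X) (hb : b ∈ A), p ⟨g₀ b, hmemS' b hb⟩ = j₂' (e ⟨b, hb⟩) := by
    intro b hb
    by_cases h : g₀ b ∈ A
    · rw [hpA ⟨g₀ b, hmemS' b hb⟩ h]
      have h0 : dist (j₁' (e ⟨g₀ b, h⟩)) (j₂' (e ⟨b, hb⟩)) = 0 := by
        rw [← heq, hιe (g₀ b) h, hιe b hb, dist_self]
      exact dist_eq_zero.mp h0
    · rw [hpB ⟨g₀ b, hmemS' b hb⟩ h]
      exact congrArg (fun z => j₂' (e z)) (Subtype.ext (g₀.symm_apply_apply b))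
  have hpiso : Isometry p := by
    apply Isometry.of_dist_eq
    intro z w
    rw [Subtype.dist_eq]
    by_cases hz : (z : X) ∈ A <;> by_cases hw : (w : X) ∈ A
    · rw [hpA z hz, hpA w hw, hj₁'.dist_eq, hdistFin, hιe _ hz, hιe _ hw]
    · rw [hpA z hz, hpB w hw, ← heq, hιe _ hz, hιe _ (hsymmA w w.2 hw), g₀.apply_symm_apply]
    · rw [hpB z hz, hpA w hw, dist_comm, ← heq, hιe _ hw, hιe _ (hsymmA z z.2 hz),
        g₀.apply_symm_apply, dist_comm]
    · rw [hpB z hz, hpB w hw, hj₂'.dist_eq, hdistFin, hιe _ (hsymmA z z.2 hz),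
        hιe _ (hsymmA w w.2 hw)]
      exact g₀.symm.dist_eq _ _
  obtain ⟨hiso, hhiso⟩ := hau S' p hpiso (ε/3) (by positivity)
  have hhW : hiso ∈ {f : X ≃ᵢ X | ∀ a ∈ A, dist a (f a) < ε} := by
    intro a ha
    have h1 : dist a (j₁' (e ⟨a, ha⟩)) < ε/3 := by
      have h' := hc₁ (e ⟨a, ha⟩); rwa [hιe a ha] at h'
    have h2 : dist (j₁' (e ⟨a, ha⟩)) (hiso a) < ε/3 := by
      have h' := hhiso ⟨a, hAS' a ha⟩
      rwa [hpA ⟨a, hAS' a ha⟩ ha] at h'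
    calc dist a (hiso a) ≤ dist a (j₁' (e ⟨a, ha⟩)) + dist (j₁' (e ⟨a, ha⟩)) (hiso a) :=
          dist_triangle _ _ _
      _ < ε/3 + ε/3 := add_lt_add h1 h2
      _ < ε := by linarith
  set k : X ≃ᵢ X := g⁻¹ * hiso * g₀ with hk
  have hkW : ∀ b ∈ A, dist b (k b) < ε := by
    intro b hb
    have hgk : g (k b) = hiso (g₀ b) := g.apply_symm_apply _
    have h2 : dist (g b) (j₂' (e ⟨b, hb⟩)) < ε/3 := by
      have h' := hc₂ (e ⟨b, hb⟩); rwa [hιe b hb] at h'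
    have h3 : dist (j₂' (e ⟨b, hb⟩)) (hiso (g₀ b)) < ε/3 := by
      have h' := hhiso ⟨g₀ b, hmemS' b hb⟩
      rwa [hpg₀ b hb] at h'
    calc dist b (k b) = dist (g b) (g (k b)) := (g.dist_eq b (k b)).symm
      _ = dist (g b) (hiso (g₀ b)) := by rw [hgk]
      _ ≤ dist (g b) (j₂' (e ⟨b, hb⟩)) + dist (j₂' (e ⟨b, hb⟩)) (hiso (g₀ b)) :=
          dist_triangle _ _ _
      _ < ε/3 + ε/3 := add_lt_add h2 h3
      _ < ε := by linarith
  have hkinvW : k⁻¹ ∈ {f : X ≃ᵢ X | ∀ a ∈ A, dist a (f a) < ε} := by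
    intro a ha
    have h2 : k (k⁻¹ a) = a := k.apply_symm_apply a
    have h1 : dist a (k⁻¹ a) = dist (k a) a := by
      calc dist a (k⁻¹ a) = dist (k a) (k (k⁻¹ a)) := (k.dist_eq _ _).symm
        _ = dist (k a) a := by rw [h2]
    rw [h1, dist_comm]
    exact hkW a ha
  have hgeq : g = hiso * g₀ * k⁻¹ := by rw [hk]; group
  refine Set.mul_subset_mul (Set.mul_subset_mul hWV (subset_refl _)) hWV ?_
  rw [hgeq]
  exact Set.mul_mem_mul (Set.mul_mem_mul hhW hg₀F) hkinvW

/-- If `(X, d)` is a separable, complete, pair-propinquitous, approximately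
ultrahomogeneous metric space, then for every `x ∈ X` and `r > 0` the set
`V_{x,r} = {f ∈ Iso(X) : d(x, f x) < r}` is a Roelcke precompact subset of the isometry
group of `X` (with the topology of pointwise convergence); in particular `Iso(X)` is
locally Roelcke precompact. -/
theorem iso_locallyRoelckePrecompact
    (X : Type*) [MetricSpace X] [TopologicalSpace.SeparableSpace X] [CompleteSpace X]
    (hpp : PairPropinquitous X) (hau : ApproximatelyUltrahomogeneous X)
    (x : X) (r : ℝ) (hr : 0 < r) :
    @RoelckePrecompact (X ≃ᵢ X) _ (isoGroupTopology X) {f : X ≃ᵢ X | dist x (f x) < r} ∧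
    @LocallyRoelckePrecompact (X ≃ᵢ X) _ (isoGroupTopology X) := by
  refine ⟨roelcke_key hpp hau x r hr, {f : X ≃ᵢ X | dist x (f x) < 1}, ?_, ?_,
    roelcke_key hpp hau x 1 one_pos⟩
  · have hopen : IsOpen {F : X → X | dist x (F x) < 1} := by
      have hset : {F : X → X | dist x (F x) < 1} =
          (fun F : X → X => F x) ⁻¹' (Metric.ball x 1) := by
        ext F; simp [Metric.mem_ball, dist_comm]
      rw [hset]
      exact Metric.isOpen_ball.preimage (continuous_apply x)
    have hcont : @Continuous (X ≃ᵢ X) (X → X) (isoGroupTopology X) _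
        (fun f : X ≃ᵢ X => (f : X → X)) := continuous_induced_dom
    exact @IsOpen.preimage _ _ (isoGroupTopology X) _ _ hcont _ hopen
  · show dist x ((1 : X ≃ᵢ X) x) < 1
    have h1 : (1 : X ≃ᵢ X) x = x := rfl
    rw [h1, dist_self]
    exact one_pos
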